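/- Let H be a group, h ∈ H non-trivial, and n ≥ 2. Write G_{(m)} = H₁ ∗ ⋯ ∗ H_m for the free product of m copies of H, and let ρₙ : Bₙ → Aut(G_{(n)}) and ρ_{n+1} : B_{n+1} → Aut(G_{(n+1)}) be the Artin type representations associated to (H,h). Let ι : Bₙ → B_{n+1} be the homomorphism sending σ_k to σ_k for k = 1, …, n−1. Then for every β ∈ Bₙ, the group Γ_{n+1}(ι(β)·σₙ) is isomorphic to Γₙ(β), where Γ_m(γ) denotes the quotient of G_{(m)} by the normal subgroup generated by { g⁻¹ · (ρ_m(γ)(g)) : g ∈ G_{(m)} }. -/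

import Mathlib

def braidRels (m : ℕ) : Set (FreeGroup (Fin m)) :=
  { r | (∃ i j : Fin m, (i : ℕ) + 1 = (j : ℕ) ∧
          r = FreeGroup.of i * FreeGroup.of j * FreeGroup.of i *
              (FreeGroup.of j * FreeGroup.of i * FreeGroup.of j)⁻¹) ∨
        (∃ i j : Fin m, (i : ℕ) + 2 ≤ (j : ℕ) ∧
          r = FreeGroup.of i * FreeGroup.of j * (FreeGroup.of j * FreeGroup.of i)⁻¹) }

abbrev BraidGroup (m : ℕ) : Type := PresentedGroup (braidRels m)

def braidGen {m : ℕ} (i : Fin m) : BraidGroup m := PresentedGroup.of i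

def idx0 {n : ℕ} (k : Fin (n - 1)) : Fin n := ⟨k.1, by have := k.2; omega⟩
def idx1 {n : ℕ} (k : Fin (n - 1)) : Fin n := ⟨k.1 + 1, by have := k.2; omega⟩

def IsArtinRep {n : ℕ} {H : Type} [Group H] (h : H)
    (ρ : BraidGroup (n - 1) →* MulAut (Monoid.CoprodI (fun _ : Fin n => H))) : Prop :=
  ∀ k : Fin (n - 1),
    (∀ y : H, ρ (braidGen k) (Monoid.CoprodI.of (i := idx0 k) y) =
        (Monoid.CoprodI.of (i := idx0 k) h)⁻¹ * Monoid.CoprodI.of (i := idx1 k) y *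
          Monoid.CoprodI.of (i := idx0 k) h) ∧
    (∀ y : H, ρ (braidGen k) (Monoid.CoprodI.of (i := idx1 k) y) =
        Monoid.CoprodI.of (i := idx0 k) h * Monoid.CoprodI.of (i := idx0 k) y *
          (Monoid.CoprodI.of (i := idx0 k) h)⁻¹) ∧
    (∀ j : Fin n, j ≠ idx0 k → j ≠ idx1 k →
      ∀ y : H, ρ (braidGen k) (Monoid.CoprodI.of (i := j) y) = Monoid.CoprodI.of (i := j) y)

abbrev artinGamma {n : ℕ} {H : Type} [Group H]
    (ρ : BraidGroup (n - 1) →* MulAut (Monoid.CoprodI (fun _ : Fin n => H)))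
    (β : BraidGroup (n - 1)) : Type :=
  Monoid.CoprodI (fun _ : Fin n => H) ⧸
    Subgroup.normalClosure
      {x : Monoid.CoprodI (fun _ : Fin n => H) |
        ∃ g : Monoid.CoprodI (fun _ : Fin n => H), x = g⁻¹ * ρ β g}

namespace GammaAux

/-- Canonical embedding of the free product of `n` copies into that of `n+1` copies. -/
def emb (n : ℕ) (H : Type) [Group H] :
    Monoid.CoprodI (fun _ : Fin n => H) →* Monoid.CoprodI (fun _ : Fin (n + 1) => H) :=
  Monoid.CoprodI.lift fun j =>
    (Monoid.CoprodI.of (M := fun _ : Fin (n + 1) => H) (i := ⟨j.1, by omega⟩))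

theorem emb_of {H : Type} [Group H] {n : ℕ} (j : Fin n) (y : H) :
    emb n H (Monoid.CoprodI.of (i := j) y) =
      Monoid.CoprodI.of (M := fun _ : Fin (n + 1) => H) (i := ⟨j.1, by omega⟩) y :=
  Monoid.CoprodI.lift_of _ _

theorem comm_lemma {H : Type} [Group H] {n : ℕ} (hn : 2 ≤ n) (h : H)
    (ρ₁ : BraidGroup (n - 1) →* MulAut (Monoid.CoprodI (fun _ : Fin n => H)))
    (hρ₁ : IsArtinRep h ρ₁)
    (ρ₂ : BraidGroup (n + 1 - 1) →* MulAut (Monoid.CoprodI (fun _ : Fin (n + 1) => H)))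
    (hρ₂ : IsArtinRep (n := n + 1) h ρ₂)
    (ι : BraidGroup (n - 1) →* BraidGroup (n + 1 - 1))
    (hι : ∀ k : Fin (n - 1),
      ι (braidGen k) = braidGen (⟨k.1, Nat.lt_of_lt_of_le k.2 (by omega)⟩ : Fin (n + 1 - 1)))
    (b : BraidGroup (n - 1)) :
    (∀ x, ρ₂ (ι b) (emb n H x) = emb n H (ρ₁ b x)) ∧
    (∀ y : H, ρ₂ (ι b) (Monoid.CoprodI.of (i := (⟨n, by omega⟩ : Fin (n + 1))) y) =
       Monoid.CoprodI.of (i := (⟨n, by omega⟩ : Fin (n + 1))) y) := by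
  let S : Subgroup (BraidGroup (n - 1)) :=
    { carrier := {b | (∀ x, ρ₂ (ι b) (emb n H x) = emb n H (ρ₁ b x)) ∧
        (∀ y : H, ρ₂ (ι b) (Monoid.CoprodI.of (i := (⟨n, by omega⟩ : Fin (n + 1))) y) =
          Monoid.CoprodI.of (i := (⟨n, by omega⟩ : Fin (n + 1))) y)}
      one_mem' := by
        constructor
        · intro x; simp
        · intro y; simp
      mul_mem' := by
        rintro a b ⟨ha1, ha2⟩ ⟨hb1, hb2⟩
        constructor
        · intro x
          rw [map_mul, map_mul, MulAut.mul_apply, hb1, ha1, map_mul, MulAut.mul_apply]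
        · intro y
          rw [map_mul, map_mul, MulAut.mul_apply, hb2, ha2]
      inv_mem' := by
        rintro a ⟨ha1, ha2⟩
        constructor
        · intro x
          have key := ha1 ((ρ₁ a)⁻¹ x)
          rw [MulAut.apply_inv_self] at key
          rw [map_inv, map_inv, ← key, MulAut.inv_def, MulEquiv.symm_apply_apply, map_inv]
        · intro y
          rw [map_inv, map_inv, MulAut.inv_def, MulEquiv.symm_apply_eq, ha2] }
  suffices hS : b ∈ S from ⟨hS.1, hS.2⟩
  refine PresentedGroup.generated_by _ S (fun k => ?_) b
  show braidGen k ∈ S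
  have hk := k.2
  set k' : Fin (n + 1 - 1) := ⟨k.1, by omega⟩ with hk'
  constructor
  · have key : (((ρ₂ (ι (braidGen k))).toMonoidHom.comp (emb n H)) =
        (emb n H).comp (ρ₁ (braidGen k)).toMonoidHom) := by
      refine Monoid.CoprodI.ext_hom _ _ (fun i => ?_)
      ext y
      simp only [MonoidHom.comp_apply, MulEquiv.coe_toMonoidHom, emb_of, hι k]
      by_cases hi0 : i = idx0 k
      · subst hi0
        have e0 : (⟨(idx0 k).1, by omega⟩ : Fin (n + 1)) = idx0 k' := rfl
        rw [e0, (hρ₂ k').1 y, (hρ₁ k).1 y]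
        simp only [map_mul, map_inv, emb_of]
        rfl
      · by_cases hi1 : i = idx1 k
        · subst hi1
          have e1 : (⟨(idx1 k).1, by omega⟩ : Fin (n + 1)) = idx1 k' := rfl
          rw [e1, (hρ₂ k').2.1 y, (hρ₁ k).2.1 y]
          simp only [map_mul, map_inv, emb_of]
          rfl
        · have d0 : (⟨i.1, by omega⟩ : Fin (n + 1)) ≠ idx0 k' := by
            intro he
            exact hi0 (Fin.ext (by simpa [idx0] using congrArg Fin.val he))
          have d1 : (⟨i.1, by omega⟩ : Fin (n + 1)) ≠ idx1 k' := by
            intro he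
            exact hi1 (Fin.ext (by simpa [idx1] using congrArg Fin.val he))
          rw [(hρ₂ k').2.2 _ d0 d1 y, (hρ₁ k).2.2 _ hi0 hi1 y, emb_of]
    intro x
    exact DFunLike.congr_fun key x
  · intro y
    rw [hι k]
    have d0 : (⟨n, by omega⟩ : Fin (n + 1)) ≠ idx0 k' := by
      intro he; have := congrArg Fin.val he; simp [idx0, k'] at this; omega
    have d1 : (⟨n, by omega⟩ : Fin (n + 1)) ≠ idx1 k' := by
      intro he; have := congrArg Fin.val he; simp [idx1, k'] at this; omega
    exact (hρ₂ k').2.2 _ d0 d1 y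



def gammaLift {n : ℕ} {H : Type} [Group H]
    (ρ : BraidGroup (n - 1) →* MulAut (Monoid.CoprodI (fun _ : Fin n => H)))
    (γ : BraidGroup (n - 1)) {K : Type} [Group K]
    (f : Monoid.CoprodI (fun _ : Fin n => H) →* K)
    (hf : ∀ g, f (ρ γ g) = f g) : artinGamma ρ γ →* K :=
  QuotientGroup.lift _ f (Subgroup.normalClosure_le_normal (by
    rintro x ⟨g, rfl⟩
    refine MonoidHom.mem_ker.2 ?_
    rw [map_mul, map_inv, hf, inv_mul_cancel]))

theorem gammaLift_mk {n : ℕ} {H : Type} [Group H]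
    (ρ : BraidGroup (n - 1) →* MulAut (Monoid.CoprodI (fun _ : Fin n => H)))
    (γ : BraidGroup (n - 1)) {K : Type} [Group K]
    (f : Monoid.CoprodI (fun _ : Fin n => H) →* K)
    (hf : ∀ g, f (ρ γ g) = f g) (g : Monoid.CoprodI (fun _ : Fin n => H)) :
    gammaLift ρ γ f hf (QuotientGroup.mk' _ g) = f g := rfl

end GammaAux

theorem gamma_stabilization_pos {H : Type} [Group H] (h : H) (hh : h ≠ 1) (n : ℕ) (hn : 2 ≤ n)
    (ρ₁ : BraidGroup (n - 1) →* MulAut (Monoid.CoprodI (fun _ : Fin n => H)))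
    (hρ₁ : IsArtinRep h ρ₁)
    (ρ₂ : BraidGroup (n + 1 - 1) →* MulAut (Monoid.CoprodI (fun _ : Fin (n + 1) => H)))
    (hρ₂ : IsArtinRep (n := n + 1) h ρ₂)
    (ι : BraidGroup (n - 1) →* BraidGroup (n + 1 - 1))
    (hι : ∀ k : Fin (n - 1),
      ι (braidGen k) = braidGen (⟨k.1, by have := k.2; omega⟩ : Fin (n + 1 - 1)))
    (β : BraidGroup (n - 1)) :
    Nonempty (artinGamma (n := n + 1) ρ₂
        (ι β * braidGen (⟨n - 1, by omega⟩ : Fin (n + 1 - 1))) ≃*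
      artinGamma ρ₁ β) := by
  classical
  have pfn1 : n - 1 < n := by omega
  have pfn1' : n - 1 < n + 1 := by omega
  have pfn : n < n + 1 := by omega
  have pfk : n - 1 < n + 1 - 1 := by omega
  set m1 : Fin n := ⟨n - 1, pfn1⟩ with hm1
  set j0 : Fin (n + 1) := ⟨n - 1, pfn1'⟩ with hj0
  set jn : Fin (n + 1) := ⟨n, pfn⟩ with hjn
  set kN : Fin (n + 1 - 1) := ⟨n - 1, pfk⟩ with hkN
  set γ₂ : BraidGroup (n + 1 - 1) := ι β * braidGen kN with hγ₂
  set π₁ : Monoid.CoprodI (fun _ : Fin n => H) →* artinGamma ρ₁ β :=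
    QuotientGroup.mk' _ with hπ₁def
  set π₂ : Monoid.CoprodI (fun _ : Fin (n + 1) => H) →* artinGamma ρ₂ γ₂ :=
    QuotientGroup.mk' _ with hπ₂def
  -- invariance of the projections
  have hπ₂ : ∀ g, π₂ (ρ₂ γ₂ g) = π₂ g := by
    intro g
    have hm : g⁻¹ * ρ₂ γ₂ g ∈
        Subgroup.normalClosure {x : Monoid.CoprodI (fun _ : Fin (n + 1) => H) |
          ∃ g, x = g⁻¹ * ρ₂ γ₂ g} := Subgroup.subset_normalClosure ⟨g, rfl⟩
    have h1 : π₂ (g⁻¹ * ρ₂ γ₂ g) = 1 := (QuotientGroup.eq_one_iff _).2 hm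
    rw [map_mul, map_inv] at h1
    exact (inv_mul_eq_one.1 h1).symm
  have hπ₁ : ∀ g, π₁ (ρ₁ β g) = π₁ g := by
    intro g
    have hm : g⁻¹ * ρ₁ β g ∈
        Subgroup.normalClosure {x : Monoid.CoprodI (fun _ : Fin n => H) |
          ∃ g, x = g⁻¹ * ρ₁ β g} := Subgroup.subset_normalClosure ⟨g, rfl⟩
    have h1 : π₁ (g⁻¹ * ρ₁ β g) = 1 := (QuotientGroup.eq_one_iff _).2 hm
    rw [map_mul, map_inv] at h1
    exact (inv_mul_eq_one.1 h1).symm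
  have hsplit : ∀ x, ρ₂ γ₂ x = ρ₂ (ι β) (ρ₂ (braidGen kN) x) := by
    intro x
    rw [hγ₂, map_mul, MulAut.mul_apply]
  obtain ⟨commβ, fixβ⟩ := GammaAux.comm_lemma hn h ρ₁ hρ₁ ρ₂ hρ₂ ι hι β
  have fixβ' : ∀ y : H, ρ₂ (ι β) (Monoid.CoprodI.of (i := jn) y) =
      Monoid.CoprodI.of (i := jn) y := fun y => fixβ y
  -- action of the extra generator
  have s0 : ∀ y : H, ρ₂ (braidGen kN) (Monoid.CoprodI.of (i := j0) y) =
      (Monoid.CoprodI.of (i := j0) h)⁻¹ * Monoid.CoprodI.of (i := jn) y *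
        Monoid.CoprodI.of (i := j0) h := by
    intro y
    have hidx1 : idx1 kN = jn := by
      apply Fin.ext
      simp [idx1, hkN, hjn]
      omega
    have t := (hρ₂ kN).1 y
    rw [hidx1] at t
    exact t
  have s1 : ∀ y : H, ρ₂ (braidGen kN) (Monoid.CoprodI.of (i := jn) y) =
      Monoid.CoprodI.of (i := j0) (h * y * h⁻¹) := by
    intro y
    have hidx1 : idx1 kN = jn := by
      apply Fin.ext
      simp [idx1, hkN, hjn]
      omega
    have t := (hρ₂ kN).2.1 y
    rw [hidx1] at t
    rw [map_mul, map_mul, map_inv]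
    exact t
  have s2 : ∀ j : Fin (n + 1), (j : ℕ) < n - 1 → ∀ y : H,
      ρ₂ (braidGen kN) (Monoid.CoprodI.of (i := j) y) = Monoid.CoprodI.of (i := j) y := by
    intro j hj y
    refine (hρ₂ kN).2.2 j ?_ ?_ y
    · intro he
      have := congrArg Fin.val he
      simp [idx0, hkN] at this
      omega
    · intro he
      have := congrArg Fin.val he
      simp [idx1, hkN] at this
      omega
  have invA : ∀ z, π₂ (ρ₂ (ι β) z) = π₂ ((ρ₂ (braidGen kN))⁻¹ z) := by
    intro z
    have e : ρ₂ γ₂ ((ρ₂ (braidGen kN))⁻¹ z) = ρ₂ (ι β) z := by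
      rw [hsplit, MulAut.apply_inv_self]
    rw [← e, hπ₂]
  have sinv : ∀ y : H, (ρ₂ (braidGen kN))⁻¹ (Monoid.CoprodI.of (i := j0) y) =
      Monoid.CoprodI.of (i := jn) (h⁻¹ * y * h) := by
    intro y
    rw [MulAut.inv_def, MulEquiv.symm_apply_eq, s1]
    have e : h * (h⁻¹ * y * h) * h⁻¹ = y := by group
    rw [e]
  have s2inv : ∀ j : Fin (n + 1), (j : ℕ) < n - 1 → ∀ y : H,
      (ρ₂ (braidGen kN))⁻¹ (Monoid.CoprodI.of (i := j) y) = Monoid.CoprodI.of (i := j) y := by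
    intro j hj y
    rw [MulAut.inv_def, MulEquiv.symm_apply_eq, s2 j hj]
  have hembm1 : ∀ y : H, GammaAux.emb n H (Monoid.CoprodI.of (i := m1) y) =
      Monoid.CoprodI.of (i := j0) y := by
    intro y
    exact GammaAux.emb_of m1 y
  have hcomm0 : ∀ y : H, ρ₂ (ι β) (Monoid.CoprodI.of (i := j0) y) =
      GammaAux.emb n H (ρ₁ β (Monoid.CoprodI.of (i := m1) y)) := by
    intro y
    rw [← hembm1, commβ]
  have hA : π₂ (GammaAux.emb n H (ρ₁ β (Monoid.CoprodI.of (i := m1) h))) =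
      π₂ (Monoid.CoprodI.of (i := jn) h) := by
    rw [← commβ, hembm1, invA, sinv]
    have e : h⁻¹ * h * h = h := by group
    rw [e]
  have P' : ∀ w : H, π₂ (Monoid.CoprodI.of (i := j0) w) =
      π₂ (Monoid.CoprodI.of (i := jn) (h⁻¹ * w * h)) := by
    intro w
    conv_lhs => rw [← hπ₂ (Monoid.CoprodI.of (i := j0) w)]
    rw [hsplit, s0]
    simp only [map_mul, map_inv]
    rw [fixβ', hcomm0, hA]
  -- the downward map
  set f₂ : Monoid.CoprodI (fun _ : Fin (n + 1) => H) →* artinGamma ρ₁ β :=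
    Monoid.CoprodI.lift (fun j =>
      if hj : (j : ℕ) < n then
        π₁.comp (Monoid.CoprodI.of (M := fun _ : Fin n => H) (i := ⟨j.1, hj⟩))
      else
        π₁.comp ((ρ₁ β).toMonoidHom.comp
          ((Monoid.CoprodI.of (M := fun _ : Fin n => H) (i := m1)).comp
            (MulAut.conj h).toMonoidHom))) with hf₂def
  have f2_lt : ∀ (j : Fin (n + 1)) (hj : (j : ℕ) < n) (y : H),
      f₂ (Monoid.CoprodI.of (i := j) y) =
        π₁ (Monoid.CoprodI.of (i := (⟨j.1, hj⟩ : Fin n)) y) := by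
    intro j hj y
    rw [hf₂def, Monoid.CoprodI.lift_of, dif_pos hj]
    rfl
  have f2_n : ∀ y : H, f₂ (Monoid.CoprodI.of (i := jn) y) =
      π₁ (ρ₁ β (Monoid.CoprodI.of (i := m1) (h * y * h⁻¹))) := by
    intro y
    rw [hf₂def, Monoid.CoprodI.lift_of, dif_neg (by simp [hjn])]
    simp only [MonoidHom.comp_apply, MulEquiv.coe_toMonoidHom, MulAut.conj_apply]
  have f2_j0 : ∀ y : H, f₂ (Monoid.CoprodI.of (i := j0) y) =
      π₁ (Monoid.CoprodI.of (i := m1) y) := by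
    intro y
    exact f2_lt j0 (by simp [hj0]; omega) y
  have f2_emb : ∀ x, f₂ (GammaAux.emb n H x) = π₁ x := by
    have key : f₂.comp (GammaAux.emb n H) = π₁ := by
      refine Monoid.CoprodI.ext_hom _ _ (fun i => ?_)
      ext y
      simp only [MonoidHom.comp_apply]
      rw [GammaAux.emb_of, f2_lt _ (by exact i.2) y]
    intro x
    exact DFunLike.congr_fun key x
  have f2inv : ∀ g, f₂ (ρ₂ γ₂ g) = f₂ g := by
    have key : f₂.comp (ρ₂ γ₂).toMonoidHom = f₂ := by
      refine Monoid.CoprodI.ext_hom _ _ (fun j => ?_)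
      ext y
      simp only [MonoidHom.comp_apply, MulEquiv.coe_toMonoidHom]
      rw [hsplit]
      by_cases h1 : (j : ℕ) < n - 1
      · have hj' : (j : ℕ) < n := by omega
        have e : Monoid.CoprodI.of (i := j) y =
            GammaAux.emb n H (Monoid.CoprodI.of (i := (⟨j.1, hj'⟩ : Fin n)) y) := by rw [GammaAux.emb_of]
        rw [s2 j h1 y, e, commβ, f2_emb, f2_emb, hπ₁]
      · by_cases h2 : (j : ℕ) = n - 1
        · have ej : j = j0 := by
            apply Fin.ext
            simp [hj0, h2]
          rw [ej, s0]
          simp only [map_mul, map_inv]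
          rw [fixβ', hcomm0, f2_emb, f2_n, f2_j0]
          have e : Monoid.CoprodI.of (M := fun _ : Fin n => H) (i := m1) (h * y * h⁻¹) =
              Monoid.CoprodI.of (i := m1) h * Monoid.CoprodI.of (i := m1) y *
                (Monoid.CoprodI.of (i := m1) h)⁻¹ := by
            rw [map_mul, map_mul, map_inv]
          rw [e]
          simp only [map_mul, map_inv]
          rw [hπ₁ (Monoid.CoprodI.of (i := m1) y)]
          group
        · have ej : j = jn := by
            apply Fin.ext
            have := j.2
            simp [hjn]
            omega
          rw [ej, s1, hcomm0, f2_emb, f2_n]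
    intro g
    exact DFunLike.congr_fun key g
  -- the upward map
  have f1inv : ∀ g, π₂ (GammaAux.emb n H (ρ₁ β g)) = π₂ (GammaAux.emb n H g) := by
    have key : (π₂.comp (GammaAux.emb n H)).comp (ρ₁ β).toMonoidHom = π₂.comp (GammaAux.emb n H) := by
      refine Monoid.CoprodI.ext_hom _ _ (fun i => ?_)
      ext y
      simp only [MonoidHom.comp_apply, MulEquiv.coe_toMonoidHom]
      by_cases h1 : (i : ℕ) < n - 1
      · rw [← commβ, GammaAux.emb_of, invA, s2inv _ h1 y]
      · have ei : i = m1 := by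
          apply Fin.ext
          have h2 := i.2
          have h3 : (m1 : ℕ) = n - 1 := rfl
          omega
        rw [ei, ← commβ, hembm1, invA, sinv, ← P']
    intro g
    exact DFunLike.congr_fun key g
  let Φ : artinGamma ρ₂ γ₂ →* artinGamma ρ₁ β := GammaAux.gammaLift ρ₂ γ₂ f₂ f2inv
  let Ψ : artinGamma ρ₁ β →* artinGamma ρ₂ γ₂ :=
    GammaAux.gammaLift ρ₁ β (π₂.comp (GammaAux.emb n H)) (fun g => f1inv g)
  have hΦ : ∀ g, Φ (π₂ g) = f₂ g := fun g => rfl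
  have hΨ : ∀ g, Ψ (π₁ g) = π₂ (GammaAux.emb n H g) := fun g => rfl
  have idA : ∀ q : artinGamma ρ₁ β, Φ (Ψ q) = q := by
    intro q
    obtain ⟨g, rfl⟩ := QuotientGroup.mk'_surjective _ q
    show Φ (Ψ (π₁ g)) = π₁ g
    rw [hΨ g, hΦ (GammaAux.emb n H g), f2_emb]
  have idB : ∀ q : artinGamma ρ₂ γ₂, Ψ (Φ q) = q := by
    have key : Ψ.comp f₂ = π₂ := by
      refine Monoid.CoprodI.ext_hom _ _ (fun j => ?_)
      ext y
      simp only [MonoidHom.comp_apply]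
      by_cases hj : (j : ℕ) < n
      · rw [f2_lt j hj y, hΨ, GammaAux.emb_of]
      · have ej : j = jn := by
          apply Fin.ext
          have h2 := j.2
          have h3 : (jn : ℕ) = n := rfl
          omega
        rw [ej, f2_n, hΨ, f1inv, hembm1, P']
        have e : h⁻¹ * (h * y * h⁻¹) * h = y := by group
        rw [e]
    intro q
    obtain ⟨g, rfl⟩ := QuotientGroup.mk'_surjective _ q
    show Ψ (Φ (π₂ g)) = π₂ g
    rw [hΦ]
    exact DFunLike.congr_fun key g
  exact ⟨{ toFun := Φ, invFun := Ψ, left_inv := idB, right_inv := idA,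
           map_mul' := fun a b => map_mul Φ a b }⟩
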